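/- Let K be a complete non-archimedean normed field and let a : (Fin n →₀ ℕ) → K be a family of coefficients tending to 0 along the cofinite filter. Let x ∈ K^n satisfy ‖x_j‖ ≤ 1 for all j, and write x^i = ∏_j x_j^{i(j)}. Then the family i ↦ a(i)·x^i is summable, the set T = {i : ‖a(i)‖ ≥ 1} is finite, and ‖∑'_i a(i)·x^i‖ < 1 if and only if ‖∑_{i ∈ T} a(i)·x^i‖ < 1. -/

import Mathlib

/-- Let `K` be a complete non-archimedean normed field, `a` the coefficient family of a
strictly convergent power series (so `a i → 0` along the cofinite filter), and `x ∈ K^n` with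
`‖x j‖ ≤ 1` for all `j`.  Then `i ↦ a i · x^i` is summable, `T = {i : ‖a i‖ ≥ 1}` is finite,
and `‖∑' i, a i · x^i‖ < 1` iff `‖∑ i ∈ T, a i · x^i‖ < 1`. -/
theorem tsum_norm_lt_one_iff_finite_part {K : Type*} [NormedField K] [CompleteSpace K]
    (hna : ∀ u v : K, ‖u + v‖ ≤ max ‖u‖ ‖v‖)
    {n : ℕ} (a : (Fin n →₀ ℕ) → K)
    (ha : Filter.Tendsto a Filter.cofinite (nhds 0))
    (x : Fin n → K) (hx : ∀ j, ‖x j‖ ≤ 1) :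
    Summable (fun i : Fin n →₀ ℕ => a i * ∏ j, x j ^ i j) ∧
    ∃ hT : {i : Fin n →₀ ℕ | 1 ≤ ‖a i‖}.Finite,
      (‖∑' i : Fin n →₀ ℕ, a i * ∏ j, x j ^ i j‖ < 1 ↔
        ‖∑ i ∈ hT.toFinset, a i * ∏ j, x j ^ i j‖ < 1) := by
  haveI : IsUltrametricDist K :=
    IsUltrametricDist.isUltrametricDist_of_isNonarchimedean_norm hna
  set f : (Fin n →₀ ℕ) → K := fun i => a i * ∏ j, x j ^ i j with hfdef
  have hfle : ∀ i, ‖f i‖ ≤ ‖a i‖ := by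
    intro i
    have h1 : ‖∏ j, x j ^ i j‖ ≤ 1 := by
      rw [norm_prod]
      apply Finset.prod_le_one
      · intro j _; positivity
      · intro j _; rw [norm_pow]; exact pow_le_one₀ (norm_nonneg _) (hx j)
    calc ‖f i‖ = ‖a i‖ * ‖∏ j, x j ^ i j‖ := norm_mul _ _
      _ ≤ ‖a i‖ * 1 := by gcongr
      _ = ‖a i‖ := mul_one _
  have hna' : Filter.Tendsto (fun i => ‖a i‖) Filter.cofinite (nhds 0) :=
    tendsto_zero_iff_norm_tendsto_zero.mp ha
  have hf0 : Filter.Tendsto f Filter.cofinite (nhds 0) := by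
    rw [tendsto_zero_iff_norm_tendsto_zero]
    exact squeeze_zero (fun i => norm_nonneg _) hfle hna'
  have hsum : Summable f := NonarchimedeanAddGroup.summable_of_tendsto_cofinite_zero hf0
  refine ⟨hsum, ?_⟩
  have hT : {i : Fin n →₀ ℕ | 1 ≤ ‖a i‖}.Finite := by
    have := Filter.eventually_cofinite.mp (hna'.eventually (gt_mem_nhds one_pos))
    convert this using 1
    ext i; simp [not_lt]
  refine ⟨hT, ?_⟩
  -- bound the tail
  have hF : {i : Fin n →₀ ℕ | (1:ℝ)/2 ≤ ‖a i‖}.Finite := by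
    have := Filter.eventually_cofinite.mp (hna'.eventually (gt_mem_nhds (by norm_num : (0:ℝ) < 1/2)))
    convert this using 1
    ext i; simp [not_lt]
  set s : Finset (Fin n →₀ ℕ) := hF.toFinset \ hT.toFinset with hs
  have hC' : ∀ i ∉ hT.toFinset, ‖f i‖ ≤ max (1/2) (if h : s.Nonempty then s.sup' h (fun i => ‖a i‖) else 0) := by
    intro i hi
    by_cases hiF : (1:ℝ)/2 ≤ ‖a i‖
    · have his : i ∈ s := by
        rw [hs, Finset.mem_sdiff]
        exact ⟨hF.mem_toFinset.mpr hiF, hi⟩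
      rw [dif_pos ⟨i, his⟩]
      exact le_max_of_le_right ((hfle i).trans (Finset.le_sup' (fun i => ‖a i‖) his))
    · exact le_max_of_le_left ((hfle i).trans (not_le.mp hiF).le)
  have hClt : max ((1:ℝ)/2) (if h : s.Nonempty then s.sup' h (fun i => ‖a i‖) else 0) < 1 := by
    rcases eq_or_ne s ∅ with h | h
    · rw [dif_neg (by simp [h])]; norm_num
    · have hne : s.Nonempty := Finset.nonempty_iff_ne_empty.mpr h
      rw [dif_pos hne, max_lt_iff]
      constructor
      · norm_num
      · rw [Finset.sup'_lt_iff]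
        intro i hi
        have : i ∉ hT.toFinset := (Finset.mem_sdiff.mp hi).2
        rw [Set.Finite.mem_toFinset, Set.mem_setOf_eq, not_le] at this
        exact this
  have hCnn : (0:ℝ) ≤ max ((1:ℝ)/2) (if h : s.Nonempty then s.sup' h (fun i => ‖a i‖) else 0) := by
    positivity
  have htail : ‖∑' i : {i // i ∉ hT.toFinset}, f i‖ < 1 := by
    refine lt_of_le_of_lt ?_ hClt
    exact IsUltrametricDist.norm_tsum_le_of_forall_le_of_nonneg hCnn (fun i => hC' i.1 i.2)
  have hsplit : (∑ i ∈ hT.toFinset, f i) + ∑' i : {i // i ∉ hT.toFinset}, f i = ∑' i, f i :=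
    hsum.sum_add_tsum_subtype_compl hT.toFinset
  constructor
  · intro h
    have : ‖∑ i ∈ hT.toFinset, f i‖
        = ‖(∑' i, f i) + (-(∑' i : {i // i ∉ hT.toFinset}, f i))‖ := by
      rw [← hsplit]; ring_nf
    rw [this]
    exact lt_of_le_of_lt (hna _ _) (max_lt h (by rwa [norm_neg]))
  · intro h
    rw [← hsplit]
    exact lt_of_le_of_lt (hna _ _) (max_lt h htail)
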